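/- For x ∈ ℝ^n and a row-finite max-plus matrix A, the max-plus orbit x(k+1) = A ⊗ x(k) with x(0) = x satisfies: for every k there exists a finite coefficient g^{(k)} such that x(k) ∈ R_{g^{(k)}} and x(k+1) = A_{g^{(k)}} ⊗ x(k). Consequently x(k) = A_{g^{(k-1)}} ⊗ ⋯ ⊗ A_{g^{(0)}} ⊗ x(0), i.e. every trajectory of the MPL system is a trajectory of the induced piecewise-affine system. -/

import Mathlib

open scoped BigOperators

/-- Max-plus matrix product over `EReal = ℝ ∪ {±∞}` (we use only `ℝ ∪ {-∞}`). -/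
noncomputable def mmul {n : ℕ} (A B : Fin n → Fin n → EReal) : Fin n → Fin n → EReal :=
  fun i j => ⨆ k, A i k + B k j

/-- Region matrix `A_g`: keeps the entry `A i (g i)` in each row `i`. -/
noncomputable def region {n : ℕ} (A : Fin n → Fin n → EReal) (g : Fin n → Fin n) :
    Fin n → Fin n → EReal :=
  fun i j => if j = g i then A i j else ⊥

/-- Conjugate matrix: `B^c(i,j) = -B(j,i)` when finite, `-∞` otherwise. -/
noncomputable def mconj {n : ℕ} (B : Fin n → Fin n → EReal) : Fin n → Fin n → EReal :=
  fun i j => if B j i = ⊥ then ⊥ else -B j i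

/-- Max-plus identity matrix. -/
noncomputable def Imat {n : ℕ} : Fin n → Fin n → EReal :=
  fun i j => if i = j then 0 else ⊥

/-- The set of points of `ℝ^n` described by a DBM `D` (constraints `x i - x j ≥ D i j`,
`-∞` bounds being vacuous). -/
def dbmSet {n : ℕ} (D : Fin n → Fin n → EReal) : Set (Fin n → ℝ) :=
  {x | ∀ i j, D i j ≤ ((x i - x j : ℝ) : EReal)}

/-- every trajectory of the MPL system `x(k+1) = A ⊗ x(k)` is a
trajectory of the induced PWA system: at each step `k` there is a finite coefficient
`gs k` with `x(k) ∈ R_{gs k}` and `x(k+1) = A_{gs k} ⊗ x(k)`. -/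
theorem mpl_orbit_is_pwa_orbit {n : ℕ} (A : Fin n → Fin n → EReal)
    (hrow : ∀ i, ∃ j, A i j ≠ ⊥) (htop : ∀ i j, A i j ≠ ⊤)
    (x : ℕ → Fin n → ℝ)
    (hx : ∀ k i, ((x (k+1) i : ℝ) : EReal) = ⨆ j, A i j + (x k j : EReal)) :
    ∃ gs : ℕ → Fin n → Fin n, ∀ k,
      (∀ i, A i (gs k i) ≠ ⊥) ∧
      (∀ i j, A i j - A i (gs k i) ≤ ((x k (gs k i) - x k j : ℝ) : EReal)) ∧
      (∀ i, ((x (k+1) i : ℝ) : EReal) = A i (gs k i) + (x k (gs k i) : EReal)) := by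
  classical
  have key : ∀ k (i : Fin n), ∃ g : Fin n, ∀ j, A i j + (x k j : EReal) ≤ A i g + (x k g : EReal) := by
    intro k i
    have : Nonempty (Fin n) := ⟨i⟩
    obtain ⟨g, hg⟩ := Finite.exists_max (fun j => A i j + (x k j : EReal))
    exact ⟨g, hg⟩
  refine ⟨fun k i => (key k i).choose, fun k => ?_⟩
  set gs : Fin n → Fin n := fun i => (key k i).choose with hgs
  have hmax : ∀ i j, A i j + (x k j : EReal) ≤ A i (gs i) + (x k (gs i) : EReal) :=
    fun i => (key k i).choose_spec
  have heq : ∀ i, ((x (k+1) i : ℝ) : EReal) = A i (gs i) + (x k (gs i) : EReal) := by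
    intro i
    rw [hx k i]
    exact le_antisymm (iSup_le (hmax i)) (le_iSup (fun j => A i j + (x k j : EReal)) (gs i))
  have hbot : ∀ i, A i (gs i) ≠ ⊥ := by
    intro i h
    have := heq i
    rw [h] at this
    simp at this
  refine ⟨hbot, ?_, heq⟩
  intro i j
  rcases eq_or_ne (A i j) ⊥ with hb | hb
  · rw [hb]
    simp
  · lift A i j to ℝ using ⟨htop i j, hb⟩ with a ha
    lift A i (gs i) to ℝ using ⟨htop i (gs i), hbot i⟩ with b hbeq
    have h := hmax i j
    rw [← ha, ← hbeq] at h
    have : (a : ℝ) + x k j ≤ b + x k (gs i) := by exact_mod_cast h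
    have : a - b ≤ x k (gs i) - x k j := by linarith
    have e : A i (key k i).choose = (b : EReal) := hbeq.symm
    rw [e]
    exact_mod_cast this
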